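/- Let k ≥ 4 and n ≥ 2k. Then |J_1| − |J_2| = C(n−k−2, k−2) − 1, and for every i with 2 ≤ i ≤ k−1, |J_i| − |J_{i+1}| = C(n−k−i−1, k−2). Consequently, |J_1| > |J_2| whenever n ≥ 2k+1, |J_i| > |J_{i+1}| whenever n ≥ 2k+i−1 and i ≥ 2, and |J_i| = |J_{i+1}| whenever 2k ≤ n < 2k+i−1 and i ≥ 2. -/

import Mathlib

/-- `I_i = [i+1, k+i]`. -/
def Iset (k i : ℕ) : Finset ℕ := Finset.Icc (i + 1) (k + i)

/-- The family `J_i = {I_1, I_i} ∪ {F ∈ C([n],k) : 1 ∈ F, F ∩ I_1 ≠ ∅, F ∩ I_i ≠ ∅}`. -/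
def Jfam (n k i : ℕ) : Finset (Finset ℕ) :=
  {Iset k 1, Iset k i} ∪
    (Finset.powersetCard k (Finset.Icc 1 n)).filter
      (fun A => 1 ∈ A ∧ (A ∩ Iset k 1).Nonempty ∧ (A ∩ Iset k i).Nonempty)

open Finset

lemma count_aux (n k : ℕ) (hn : 1 ≤ n) (hk : 1 ≤ k) (S : Finset ℕ) (hS : S ⊆ Finset.Icc 2 n) :
    ((Finset.powersetCard k (Finset.Icc 1 n)).filter
      (fun A => 1 ∈ A ∧ A ∩ S = ∅)).card = (n - 1 - S.card).choose (k - 1) := by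
  have hScard : S.card ≤ n - 1 := by
    have := Finset.card_le_card hS
    rw [Nat.card_Icc] at this; omega
  have hcard : (Finset.Icc 2 n \ S).card = n - 1 - S.card := by
    rw [Finset.card_sdiff_of_subset hS, Nat.card_Icc]; omega
  rw [← hcard, ← Finset.card_powersetCard]
  refine Finset.card_nbij' (fun A => A.erase 1) (fun B => insert 1 B) ?_ ?_ ?_ ?_
  · intro A hA
    simp only [mem_coe, mem_filter, mem_powersetCard] at hA
    obtain ⟨⟨hsub, hcardA⟩, h1, hAS⟩ := hA
    simp only [mem_coe, mem_powersetCard]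
    constructor
    · intro x hx
      simp only [mem_erase] at hx
      have hx1 := hsub hx.2
      simp only [mem_Icc] at hx1
      refine mem_sdiff.mpr ⟨?_, ?_⟩
      · simp only [mem_Icc]; omega
      · intro hxS
        have : x ∈ A ∩ S := mem_inter.mpr ⟨hx.2, hxS⟩
        rw [hAS] at this; exact absurd this (notMem_empty x)
    · rw [card_erase_of_mem h1, hcardA]
  · intro B hB
    simp only [mem_coe, mem_powersetCard] at hB
    obtain ⟨hsub, hcardB⟩ := hB
    simp only [mem_coe, mem_filter, mem_powersetCard]
    have h1B : 1 ∉ B := by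
      intro h; have := hsub h; simp only [mem_sdiff, mem_Icc] at this; omega
    refine ⟨⟨?_, ?_⟩, mem_insert_self 1 B, ?_⟩
    · intro x hx
      rcases mem_insert.mp hx with rfl | hx
      · simp only [mem_Icc]; omega
      · have := hsub hx; simp only [mem_sdiff, mem_Icc] at this ⊢; omega
    · rw [card_insert_of_notMem h1B, hcardB]; omega
    · ext x
      simp only [mem_inter, mem_insert, notMem_empty, iff_false, not_and]
      rintro (rfl | hxB) hxS
      · have := hS hxS; simp [mem_Icc] at this
      · have := hsub hxB; simp only [mem_sdiff] at this; exact this.2 hxS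
  · intro A hA
    simp only [mem_coe, mem_filter] at hA
    exact insert_erase hA.2.1
  · intro B hB
    simp only [mem_coe, mem_powersetCard] at hB
    have h1B : 1 ∉ B := by
      intro h; have := hB.1 h; simp only [mem_sdiff, mem_Icc] at this; omega
    exact erase_insert h1B

lemma cardA (n k i : ℕ) (hk : 4 ≤ k) (hn : 2 * k ≤ n) (hi1 : 1 ≤ i) (hik : i ≤ k) :
    (((Finset.powersetCard k (Finset.Icc 1 n)).filter
      (fun A => 1 ∈ A ∧ (A ∩ Iset k 1).Nonempty ∧ (A ∩ Iset k i).Nonempty)).card : ℤ)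
    = ((n - 1).choose (k - 1) : ℤ) - 2 * ((n - k - 1).choose (k - 1) : ℤ)
      + ((n - k - i).choose (k - 1) : ℤ) := by
  set base := Finset.powersetCard k (Finset.Icc 1 n) with hbase
  have hn1 : 1 ≤ n := by omega
  have hk1 : 1 ≤ k := by omega
  have hS1sub : Iset k 1 ⊆ Finset.Icc 2 n := by
    intro x hx; simp only [Iset, mem_Icc] at hx ⊢; omega
  have hSisub : Iset k i ⊆ Finset.Icc 2 n := by
    intro x hx; simp only [Iset, mem_Icc] at hx ⊢; omega
  have hUsub : Finset.Icc 2 (k + i) ⊆ Finset.Icc 2 n := by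
    intro x hx; simp only [mem_Icc] at hx ⊢; omega
  have hUnion : Iset k 1 ∪ Iset k i = Finset.Icc 2 (k + i) := by
    ext x; simp only [Iset, mem_union, mem_Icc]; omega
  -- counts
  have hN : (base.filter (fun A => 1 ∈ A)).card = (n - 1).choose (k - 1) := by
    have := count_aux n k hn1 hk1 ∅ (by simp)
    simpa using this
  have hM1 : (base.filter (fun A => 1 ∈ A ∧ A ∩ Iset k 1 = ∅)).card
      = (n - k - 1).choose (k - 1) := by
    have := count_aux n k hn1 hk1 (Iset k 1) hS1sub
    rw [this]
    congr 1
    simp only [Iset, Nat.card_Icc]; omega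
  have hMi : (base.filter (fun A => 1 ∈ A ∧ A ∩ Iset k i = ∅)).card
      = (n - k - 1).choose (k - 1) := by
    have := count_aux n k hn1 hk1 (Iset k i) hSisub
    rw [this]
    congr 1
    simp only [Iset, Nat.card_Icc]; omega
  have hM' : (base.filter (fun A => 1 ∈ A ∧ A ∩ Iset k 1 = ∅ ∧ A ∩ Iset k i = ∅)).card
      = (n - k - i).choose (k - 1) := by
    have heq : base.filter (fun A => 1 ∈ A ∧ A ∩ Iset k 1 = ∅ ∧ A ∩ Iset k i = ∅)
        = base.filter (fun A => 1 ∈ A ∧ A ∩ Finset.Icc 2 (k + i) = ∅) := by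
      apply Finset.filter_congr
      intro A _
      rw [← hUnion, Finset.inter_union_distrib_left, Finset.union_eq_empty]
    rw [heq, count_aux n k hn1 hk1 _ hUsub]
    congr 1
    rw [Nat.card_Icc]; omega
  -- inclusion exclusion
  have key1 : (base.filter (fun A => 1 ∈ A ∧ ((A ∩ Iset k 1).Nonempty ∧ (A ∩ Iset k i).Nonempty))).card
      + (base.filter (fun A => 1 ∈ A ∧ ¬((A ∩ Iset k 1).Nonempty ∧ (A ∩ Iset k i).Nonempty))).card
      = (base.filter (fun A => 1 ∈ A)).card := by
    have h := Finset.card_filter_add_card_filter_not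
      (s := base.filter (fun A => 1 ∈ A))
      (p := fun A => (A ∩ Iset k 1).Nonempty ∧ (A ∩ Iset k i).Nonempty)
    rw [Finset.filter_filter, Finset.filter_filter] at h
    exact h
  have key2 : base.filter (fun A => 1 ∈ A ∧ ¬((A ∩ Iset k 1).Nonempty ∧ (A ∩ Iset k i).Nonempty))
      = base.filter (fun A => 1 ∈ A ∧ A ∩ Iset k 1 = ∅)
        ∪ base.filter (fun A => 1 ∈ A ∧ A ∩ Iset k i = ∅) := by
    ext A
    simp only [mem_filter, mem_union, not_and_or, Finset.not_nonempty_iff_eq_empty]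
    tauto
  have key3 : (base.filter (fun A => 1 ∈ A ∧ A ∩ Iset k 1 = ∅)
        ∪ base.filter (fun A => 1 ∈ A ∧ A ∩ Iset k i = ∅)).card
      + (base.filter (fun A => 1 ∈ A ∧ A ∩ Iset k 1 = ∅ ∧ A ∩ Iset k i = ∅)).card
      = (base.filter (fun A => 1 ∈ A ∧ A ∩ Iset k 1 = ∅)).card
        + (base.filter (fun A => 1 ∈ A ∧ A ∩ Iset k i = ∅)).card := by
    have hinter : base.filter (fun A => 1 ∈ A ∧ A ∩ Iset k 1 = ∅)
        ∩ base.filter (fun A => 1 ∈ A ∧ A ∩ Iset k i = ∅)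
        = base.filter (fun A => 1 ∈ A ∧ A ∩ Iset k 1 = ∅ ∧ A ∩ Iset k i = ∅) := by
      ext A
      simp only [mem_filter, mem_inter]
      tauto
    rw [← hinter]
    exact Finset.card_union_add_card_inter _ _
  rw [key2] at key1
  rw [hN, hM1, hMi, hM'] at *
  omega


lemma one_not_mem_Iset (k i : ℕ) (hi : 1 ≤ i) : 1 ∉ Iset k i := by
  simp [Iset, mem_Icc]
  omega

lemma cardJ1 (n k : ℕ) (hk : 4 ≤ k) (hn : 2 * k ≤ n) :
    ((Jfam n k 1).card : ℤ)
      = ((n - 1).choose (k - 1) : ℤ) - ((n - k - 1).choose (k - 1) : ℤ) + 1 := by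
  have hpair : ({Iset k 1, Iset k 1} : Finset (Finset ℕ)) = {Iset k 1} := by simp
  have hdisj : Disjoint ({Iset k 1} : Finset (Finset ℕ))
      ((Finset.powersetCard k (Finset.Icc 1 n)).filter
        (fun A => 1 ∈ A ∧ (A ∩ Iset k 1).Nonempty ∧ (A ∩ Iset k 1).Nonempty)) := by
    simp only [Finset.disjoint_left, mem_singleton, mem_filter]
    rintro A rfl ⟨_, h1, _⟩
    exact one_not_mem_Iset k 1 le_rfl h1
  have hA := cardA n k 1 hk hn (le_refl 1) (by omega)
  rw [Jfam, hpair, Finset.card_union_of_disjoint hdisj, Finset.card_singleton]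
  push_cast
  rw [hA]
  ring

lemma cardJi (n k i : ℕ) (hk : 4 ≤ k) (hn : 2 * k ≤ n) (hi1 : 2 ≤ i) (hik : i ≤ k) :
    ((Jfam n k i).card : ℤ)
      = ((n - 1).choose (k - 1) : ℤ) - 2 * ((n - k - 1).choose (k - 1) : ℤ)
        + ((n - k - i).choose (k - 1) : ℤ) + 2 := by
  have hne : Iset k 1 ≠ Iset k i := by
    intro h
    have h2 : (2 : ℕ) ∈ Iset k 1 := by simp [Iset, mem_Icc]; omega
    rw [h] at h2
    simp [Iset, mem_Icc] at h2
    omega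
  have hpair : ({Iset k 1, Iset k i} : Finset (Finset ℕ)).card = 2 := by
    rw [Finset.card_insert_of_notMem (by simpa using hne), Finset.card_singleton]
  have hdisj : Disjoint ({Iset k 1, Iset k i} : Finset (Finset ℕ))
      ((Finset.powersetCard k (Finset.Icc 1 n)).filter
        (fun A => 1 ∈ A ∧ (A ∩ Iset k 1).Nonempty ∧ (A ∩ Iset k i).Nonempty)) := by
    simp only [Finset.disjoint_left, mem_insert, mem_singleton, mem_filter]
    rintro A (rfl | rfl) ⟨_, h1, _⟩
    · exact one_not_mem_Iset k 1 le_rfl h1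
    · exact one_not_mem_Iset k i (by omega) h1
  have hA := cardA n k i hk hn (by omega) hik
  rw [Jfam, Finset.card_union_of_disjoint hdisj, hpair]
  push_cast
  rw [hA]
  ring

theorem stmt18 (n k : ℕ) (hk : 4 ≤ k) (hn : 2 * k ≤ n) :
    ((Jfam n k 1).card : ℤ) - ((Jfam n k 2).card : ℤ)
        = ((n - k - 2).choose (k - 2) : ℤ) - 1 ∧
    (∀ i : ℕ, 2 ≤ i → i ≤ k - 1 →
      ((Jfam n k i).card : ℤ) - ((Jfam n k (i + 1)).card : ℤ)
        = ((n - k - i - 1).choose (k - 2) : ℤ)) ∧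
    (2 * k + 1 ≤ n → (Jfam n k 2).card < (Jfam n k 1).card) ∧
    (∀ i : ℕ, 2 ≤ i → i ≤ k - 1 → 2 * k + i - 1 ≤ n →
      (Jfam n k (i + 1)).card < (Jfam n k i).card) ∧
    (∀ i : ℕ, 2 ≤ i → i ≤ k - 1 → n < 2 * k + i - 1 →
      (Jfam n k i).card = (Jfam n k (i + 1)).card) := by
  have h1 := cardJ1 n k hk hn
  have h2 := cardJi n k 2 hk hn (le_refl 2) (by omega)
  -- Pascal for part 1
  have hp1 : (n - k - 1).choose (k - 1)
      = (n - k - 2).choose (k - 2) + (n - k - 2).choose (k - 1) := by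
    have e1 : n - k - 1 = (n - k - 2) + 1 := by omega
    have e2 : k - 1 = (k - 2) + 1 := by omega
    rw [e1, e2]
    exact Nat.choose_succ_succ _ _
  have part1 : ((Jfam n k 1).card : ℤ) - ((Jfam n k 2).card : ℤ)
      = ((n - k - 2).choose (k - 2) : ℤ) - 1 := by
    rw [h1, h2]
    have : n - k - 2 = n - k - 2 := rfl
    push_cast [hp1]
    ring
  have part2 : ∀ i : ℕ, 2 ≤ i → i ≤ k - 1 →
      ((Jfam n k i).card : ℤ) - ((Jfam n k (i + 1)).card : ℤ)
        = ((n - k - i - 1).choose (k - 2) : ℤ) := by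
    intro i hi1 hik
    have hi := cardJi n k i hk hn hi1 (by omega)
    have hi' := cardJi n k (i + 1) hk hn (by omega) (by omega)
    have hp : (n - k - i).choose (k - 1)
        = (n - k - i - 1).choose (k - 2) + (n - k - i - 1).choose (k - 1) := by
      have e1 : n - k - i = (n - k - i - 1) + 1 := by omega
      have e2 : k - 1 = (k - 2) + 1 := by omega
      rw [e1, e2]
      exact Nat.choose_succ_succ _ _
    have e3 : n - k - (i + 1) = n - k - i - 1 := by omega
    rw [hi, hi', e3]
    push_cast [hp]
    ring
  refine ⟨part1, part2, ?_, ?_, ?_⟩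
  · intro hn1
    have hge : 3 ≤ (n - k - 2).choose (k - 2) := by
      calc 3 ≤ k - 1 := by omega
        _ = ((k - 2) + 1).choose (k - 2) := by rw [Nat.choose_succ_self_right]; omega
        _ ≤ (n - k - 2).choose (k - 2) := Nat.choose_le_choose _ (by omega)
    omega
  · intro i hi1 hik hni
    have h := part2 i hi1 hik
    have hpos : 0 < (n - k - i - 1).choose (k - 2) :=
      Nat.choose_pos (by omega)
    omega
  · intro i hi1 hik hni
    have h := part2 i hi1 hik
    have hz : (n - k - i - 1).choose (k - 2) = 0 :=
      Nat.choose_eq_zero_of_lt (by omega)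
    omega
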